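/- Let G be a topological group. If μ, ν ∈ Meas(rG) are uniform measures, then μ ⋆ ν is a uniform measure; and if μ, ν are positive, then μ ⋆ ν is positive. -/

import Mathlib

noncomputable section

open Filter Topology Uniformity

/-- `f` is a bounded uniformly continuous real-valued function,
i.e. a member of `Ub(X)`. -/
def IsUb {X : Type*} [UniformSpace X] (f : X → ℝ) : Prop :=
  UniformContinuous f ∧ ∃ C : ℝ, ∀ x, |f x| ≤ C

/-- Supremum norm of a real-valued function. -/
def supNorm {α : Type*} (f : α → ℝ) : ℝ :=
  sSup (Set.range fun x => |f x|)

/-- `μ` is (the restriction to `Ub(X)` of) a norm-continuous linear functional on `Ub(X)`,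
i.e. a member of `Meas(X)`.  It is represented as a bare map on all functions;
only its values on `Ub(X)` are relevant. -/
def IsMeas {X : Type*} [UniformSpace X] (μ : (X → ℝ) → ℝ) : Prop :=
  (∀ f g : X → ℝ, IsUb f → IsUb g → μ (f + g) = μ f + μ g) ∧
  (∀ (c : ℝ) (f : X → ℝ), IsUb f → μ (c • f) = c * μ f) ∧
  (∃ C : ℝ, ∀ f : X → ℝ, IsUb f → (∀ x, |f x| ≤ 1) → |μ f| ≤ C)

/-- The dual norm on `Meas(X)`:  `‖μ‖ = sup {|μ f| : f ∈ Ub(X), ‖f‖ ≤ 1}`. -/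
def measNorm {X : Type*} [UniformSpace X] (μ : (X → ℝ) → ℝ) : ℝ :=
  sSup {r : ℝ | ∃ f : X → ℝ, IsUb f ∧ (∀ x, |f x| ≤ 1) ∧ r = |μ f|}

/-- `μ` is a positive functional:  `μ f ≥ 0` whenever `f ∈ Ub(X)` and `f ≥ 0`. -/
def IsPositive {X : Type*} [UniformSpace X] (μ : (X → ℝ) → ℝ) : Prop :=
  ∀ f : X → ℝ, IsUb f → (∀ x, 0 ≤ f x) → 0 ≤ μ f

/-- `μ` is a *uniform measure*: on every norm-bounded uniformly equicontinuous set
`H ⊆ Ub(X)`, `μ` is continuous for the topology of pointwise convergence. -/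
def IsUniformMeasure {X : Type*} [UniformSpace X] (μ : (X → ℝ) → ℝ) : Prop :=
  ∀ H : Set (X → ℝ),
    (∃ C : ℝ, ∀ f ∈ H, ∀ x, |f x| ≤ C) →
    H.UniformEquicontinuous →
    ∀ f₀ ∈ H, ∀ ε : ℝ, 0 < ε →
      ∃ (K : Finset X) (δ : ℝ), 0 < δ ∧
        ∀ f ∈ H, (∀ x ∈ K, |f x - f₀ x| < δ) → |μ f - μ f₀| < ε

/-- A *semiuniform* function on `X × Y`, i.e. a member of `Ub(X ⋉ Y)` where `X ⋉ Y` is the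
semiuniform product: `f` is bounded, the family of sections `x ↦ f (x, y)` (for `y ∈ Y`)
is uniformly equicontinuous on `X`, and every section `y ↦ f (x, y)` is uniformly
continuous on `Y`. -/
def Semiuniform {X Y : Type*} [UniformSpace X] [UniformSpace Y] (f : X × Y → ℝ) : Prop :=
  (∃ C : ℝ, ∀ p, |f p| ≤ C) ∧
  UniformEquicontinuous (fun y : Y => fun x : X => f (x, y)) ∧
  ∀ x : X, UniformContinuous fun y : Y => f (x, y)

/-- The direct product `μ ⊗ ν`, evaluated at `f : X × Y → ℝ`:
`(μ ⊗ ν)(f) = μ (x ↦ ν (y ↦ f (x, y)))`. -/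
def dirProd {X Y : Type*} (μ : (X → ℝ) → ℝ) (ν : (Y → ℝ) → ℝ) (f : X × Y → ℝ) : ℝ :=
  μ fun x => ν fun y => f (x, y)

/-- Convolution: `(μ ⋆ ν)(f) = μ (x ↦ ν (y ↦ f (x · y)))`. -/
def conv {G : Type*} [Mul G] (μ ν : (G → ℝ) → ℝ) : (G → ℝ) → ℝ :=
  fun f => μ fun x => ν fun y => f (x * y)

/-- The weak-* topology on `Meas(X)`: the topology of pointwise convergence on `Ub(X)`. -/
def weakStarMeas (X : Type*) [UniformSpace X] :
    TopologicalSpace {ν : (X → ℝ) → ℝ // IsMeas ν} :=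
  TopologicalSpace.induced
    (fun ν => fun f : {f : X → ℝ // IsUb f} => ν.1 f.1) Pi.topologicalSpace

-- helpers
lemma myIsUb_smul {X : Type*} [UniformSpace X] (c : ℝ) {f : X → ℝ} (hf : IsUb f) :
    IsUb (c • f) := by
  obtain ⟨h1, C, hC⟩ := hf
  refine ⟨h1.const_smul c, |c| * C, fun x => ?_⟩
  simp only [Pi.smul_apply, smul_eq_mul, abs_mul]
  exact mul_le_mul_of_nonneg_left (hC x) (abs_nonneg c)

lemma myIsUb_sub {X : Type*} [UniformSpace X] {f g : X → ℝ} (hf : IsUb f) (hg : IsUb g) :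
    IsUb (f - g) := by
  obtain ⟨h1, C, hC⟩ := hf
  obtain ⟨h2, D, hD⟩ := hg
  refine ⟨h1.sub h2, C + D, fun x => ?_⟩
  simp only [Pi.sub_apply]
  calc |f x - g x| ≤ |f x| + |g x| := abs_sub _ _
    _ ≤ C + D := add_le_add (hC x) (hD x)

lemma myMeas_sub {X : Type*} [UniformSpace X] {μ : (X → ℝ) → ℝ} (hμ : IsMeas μ)
    {f g : X → ℝ} (hf : IsUb f) (hg : IsUb g) : μ (f - g) = μ f - μ g := by
  have hfg : f - g = f + (-1 : ℝ) • g := by funext x; simp; ring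
  rw [hfg, hμ.1 f ((-1 : ℝ) • g) hf (myIsUb_smul _ hg), hμ.2.1 (-1) g hg]
  ring

lemma myMeas_bound {X : Type*} [UniformSpace X] {μ : (X → ℝ) → ℝ} (hμ : IsMeas μ) :
    ∃ C : ℝ, 0 ≤ C ∧ ∀ f : X → ℝ, IsUb f → ∀ B : ℝ, 0 < B → (∀ x, |f x| ≤ B) → |μ f| ≤ C * B := by
  obtain ⟨C0, hC0⟩ := hμ.2.2
  refine ⟨max C0 0, le_max_right _ _, fun f hf B hB hfB => ?_⟩
  have hh : IsUb (B⁻¹ • f) := myIsUb_smul _ hf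
  have hfe : f = B • (B⁻¹ • f) := by
    funext x; simp only [Pi.smul_apply, smul_eq_mul]; field_simp
  have h1 : ∀ x, |(B⁻¹ • f) x| ≤ 1 := by
    intro x
    simp only [Pi.smul_apply, smul_eq_mul, abs_mul, abs_inv, abs_of_pos hB]
    rw [inv_mul_le_iff₀ hB, mul_one]
    exact hfB x
  have := hC0 _ hh h1
  calc |μ f| = |μ (B • (B⁻¹ • f))| := by rw [← hfe]
    _ = |B * μ (B⁻¹ • f)| := by rw [hμ.2.1 B _ hh]
    _ = B * |μ (B⁻¹ • f)| := by rw [abs_mul, abs_of_pos hB]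
    _ ≤ B * max C0 0 := by
        exact mul_le_mul_of_nonneg_left (le_trans this (le_max_left _ _)) hB.le
    _ = max C0 0 * B := mul_comm _ _

section Grp
variable {G : Type*} [Group G] [TopologicalSpace G] [IsTopologicalGroup G] [UniformSpace G]

omit [IsTopologicalGroup G] in
lemma myUec_iff (hU : 𝓤 G = Filter.comap (fun p : G × G => p.2 / p.1) (𝓝 1))
    {ι : Type*} (F : ι → G → ℝ) :
    UniformEquicontinuous F ↔
      ∀ ε : ℝ, 0 < ε → ∃ V ∈ 𝓝 (1 : G), ∀ i (x x' : G), x' / x ∈ V → |F i x' - F i x| < ε := by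
  constructor
  · intro h ε hε
    have h2 := h _ (Metric.dist_mem_uniformity hε)
    rw [Filter.eventually_iff, hU, Filter.mem_comap] at h2
    obtain ⟨V, hV, hsub⟩ := h2
    refine ⟨V, hV, fun i x x' hx => ?_⟩
    have := hsub (show ((x, x') : G × G) ∈ _ from hx) i
    simpa [Real.dist_eq, abs_sub_comm] using this
  · intro h U hU'
    obtain ⟨ε, hε, hball⟩ := Metric.mem_uniformity_dist.mp hU'
    obtain ⟨V, hV, hF⟩ := h ε hε
    rw [Filter.eventually_iff, hU, Filter.mem_comap]
    refine ⟨V, hV, fun xy hxy i => ?_⟩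
    apply hball
    rw [Real.dist_eq, abs_sub_comm]
    exact hF i xy.1 xy.2 hxy

omit [IsTopologicalGroup G] in
lemma myUc_iff (hU : 𝓤 G = Filter.comap (fun p : G × G => p.2 / p.1) (𝓝 1)) (g : G → ℝ) :
    UniformContinuous g ↔
      ∀ ε : ℝ, 0 < ε → ∃ V ∈ 𝓝 (1 : G), ∀ x x' : G, x' / x ∈ V → |g x' - g x| < ε := by
  have h := myUec_iff hU (fun _ : Unit => g)
  constructor
  · intro hg ε hε
    have huec : UniformEquicontinuous (fun _ : Unit => g) := fun U hU' =>
      Filter.mem_of_superset (Filter.mem_map.mp (hg hU')) (fun xy hxy _ => hxy)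
    obtain ⟨V, h1, h2⟩ := h.mp huec ε hε
    exact ⟨V, h1, fun x x' => h2 () x x'⟩
  · intro hg
    have huec : UniformEquicontinuous (fun _ : Unit => g) :=
      h.mpr (fun ε hε => (hg ε hε).imp fun V hV => ⟨hV.1, fun _ => hV.2⟩)
    exact huec.uniformContinuous ()

end Grp

theorem stmt13 {G : Type*} [Group G] [TopologicalSpace G] [IsTopologicalGroup G] :
    letI : UniformSpace G := IsTopologicalGroup.rightUniformSpace G
    ∀ μ ν : (G → ℝ) → ℝ, IsMeas μ → IsMeas ν →
      ((IsUniformMeasure μ → IsUniformMeasure ν → IsUniformMeasure (conv μ ν)) ∧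
        (IsPositive μ → IsPositive ν → IsPositive (conv μ ν))) := by
  letI : UniformSpace G := IsTopologicalGroup.rightUniformSpace G
  intro μ ν hμ hν
  classical
  have hU : 𝓤 G = Filter.comap (fun p : G × G => p.2 / p.1) (𝓝 1) := by
    simp_rw [div_eq_mul_inv]; rfl
  obtain ⟨Cν, hCν0, hCν⟩ := myMeas_bound hν
  -- the conjugate neighbourhood trick
  have hconj : ∀ (x : G) (V : Set G), V ∈ 𝓝 (1 : G) →
      ∃ W ∈ 𝓝 (1 : G), ∀ w ∈ W, x * w * x⁻¹ ∈ V := by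
    intro x V hV
    have hc : ContinuousAt (fun w : G => x * w * x⁻¹) 1 :=
      ((continuous_const.mul continuous_id).mul continuous_const).continuousAt
    have h1 : (fun w : G => x * w * x⁻¹) 1 = 1 := by simp
    have := hc (by rw [h1]; exact hV)
    exact ⟨_, this, fun w hw => hw⟩
  -- sections are IsUb
  have hsect : ∀ (f : G → ℝ), IsUb f → ∀ x : G, IsUb (fun y => f (x * y)) := by
    intro f hf x
    obtain ⟨hfc, Cf, hCf⟩ := hf
    refine ⟨(myUc_iff hU _).mpr ?_, Cf, fun y => hCf _⟩
    intro ε hε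
    obtain ⟨V, hV, hVf⟩ := (myUc_iff hU f).mp hfc ε hε
    obtain ⟨W, hW, hWV⟩ := hconj x V hV
    refine ⟨W, hW, fun y y' hy => ?_⟩
    refine hVf (x * y) (x * y') ?_
    have : (x * y') / (x * y) = x * (y' / y) * x⁻¹ := by
      simp [div_eq_mul_inv, mul_inv_rev, mul_assoc]
    rw [this]
    exact hWV _ hy
  -- key difference bound for ν
  have hνdiff : ∀ (g h : G → ℝ), IsUb g → IsUb h → ∀ B : ℝ, 0 < B →
      (∀ y, |g y - h y| ≤ B) → |ν g - ν h| ≤ Cν * B := by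
    intro g h hg hh B hB hgh
    rw [← myMeas_sub hν hg hh]
    exact hCν _ (myIsUb_sub hg hh) B hB hgh
  -- the operator T
  set T : (G → ℝ) → G → ℝ := fun f x => ν (fun y => f (x * y)) with hT
  have hTε : ∀ ε : ℝ, 0 < ε → Cν * (ε / (2 * (Cν + 1))) < ε := by
    intro ε hε
    have h1 : 0 < 2 * (Cν + 1) := by linarith
    have h2 : Cν * (ε / (2 * (Cν + 1))) ≤ (Cν + 1) * (ε / (2 * (Cν + 1))) :=
      mul_le_mul_of_nonneg_right (by linarith) (by positivity)
    have h3 : (Cν + 1) * (ε / (2 * (Cν + 1))) = ε / 2 := by field_simp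
    linarith
  constructor
  · -- uniform measure part
    intro hμu hνu
    intro H ⟨CH0, hCH0⟩ hHue f₀ hf₀ ε hε
    -- pointwise control of H via equicontinuity
    have hHuec : ∀ ε : ℝ, 0 < ε → ∃ V ∈ 𝓝 (1 : G), ∀ f ∈ H, ∀ x x' : G,
        x' / x ∈ V → |f x' - f x| < ε := by
      intro ε hε
      obtain ⟨V, hV, hVf⟩ := (myUec_iff hU ((↑) : H → G → ℝ)).mp hHue ε hε
      exact ⟨V, hV, fun f hf x x' hx => hVf ⟨f, hf⟩ x x' hx⟩
    have hHub : ∀ f ∈ H, IsUb f := by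
      intro f hf
      refine ⟨(myUc_iff hU f).mpr fun ε hε => ?_, CH0, hCH0 f hf⟩
      obtain ⟨V, hV, hVf⟩ := hHuec ε hε
      exact ⟨V, hV, hVf f hf⟩
    set CH : ℝ := max CH0 0 + 1 with hCH
    have hCHpos : 0 < CH := by positivity
    have hCHb : ∀ f ∈ H, ∀ x, |f x| ≤ CH := by
      intro f hf x
      have h1 := hCH0 f hf x
      have h2 := le_max_left CH0 (0 : ℝ)
      rw [hCH]; linarith
    -- TH is bounded and uniformly equicontinuous
    set TH : Set (G → ℝ) := T '' H with hTH
    have hTHb : ∀ g ∈ TH, ∀ x, |g x| ≤ Cν * CH := by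
      rintro g ⟨f, hf, rfl⟩ x
      exact hCν _ (hsect f (hHub f hf) x) CH hCHpos (fun y => hCHb f hf _)
    have hTHdiff : ∀ f ∈ H, ∀ x x' : G, ∀ ε : ℝ, 0 < ε →
        (∀ y : G, |f (x' * y) - f (x * y)| ≤ ε) → |T f x' - T f x| ≤ Cν * ε := by
      intro f hf x x' ε' hε' hyp
      exact hνdiff _ _ (hsect f (hHub f hf) x') (hsect f (hHub f hf) x) ε' hε' hyp
    have hTHue : TH.UniformEquicontinuous := by
      refine (myUec_iff hU ((↑) : TH → G → ℝ)).mpr fun ε hε => ?_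
      set ε' : ℝ := ε / (2 * (Cν + 1)) with hε'def
      have hε' : 0 < ε' := by positivity
      obtain ⟨V, hV, hVf⟩ := hHuec ε' hε'
      refine ⟨V, hV, ?_⟩
      rintro ⟨g, f, hf, rfl⟩ x x' hx
      have h1 : ∀ y : G, |f (x' * y) - f (x * y)| ≤ ε' := by
        intro y
        have : (x' * y) / (x * y) = x' / x := by
          simp [div_eq_mul_inv, mul_inv_rev, mul_assoc]
        exact le_of_lt (hVf f hf (x * y) (x' * y) (by rw [this]; exact hx))
      calc |T f x' - T f x| ≤ Cν * ε' := hTHdiff f hf x x' ε' hε' h1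
        _ < ε := hTε ε hε
    -- apply μ's uniform-measure property to TH
    obtain ⟨K', δ', hδ', hK'⟩ :=
      hμu TH ⟨Cν * CH, hTHb⟩ hTHue (T f₀) ⟨f₀, hf₀, rfl⟩ ε hε
    -- for each x, apply ν's uniform-measure property to the section family
    have hx : ∀ x : G, ∃ (Kx : Finset G) (δx : ℝ), 0 < δx ∧
        ∀ f ∈ H, (∀ y ∈ Kx, |f (x * y) - f₀ (x * y)| < δx) →
          |ν (fun y => f (x * y)) - ν (fun y => f₀ (x * y))| < δ' := by
      intro x
      set Hx : Set (G → ℝ) := (fun f : G → ℝ => fun y => f (x * y)) '' H with hHx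
      have hHxb : ∃ C : ℝ, ∀ g ∈ Hx, ∀ y, |g y| ≤ C := by
        refine ⟨CH, ?_⟩
        rintro g ⟨f, hf, rfl⟩ y
        exact hCHb f hf _
      have hHxue : Hx.UniformEquicontinuous := by
        refine (myUec_iff hU ((↑) : Hx → G → ℝ)).mpr fun ε hε => ?_
        obtain ⟨V, hV, hVf⟩ := hHuec ε hε
        obtain ⟨W, hW, hWV⟩ := hconj x V hV
        refine ⟨W, hW, ?_⟩
        rintro ⟨g, f, hf, rfl⟩ y y' hy
        refine hVf f hf (x * y) (x * y') ?_
        have : (x * y') / (x * y) = x * (y' / y) * x⁻¹ := by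
          simp [div_eq_mul_inv, mul_inv_rev, mul_assoc]
        rw [this]
        exact hWV _ hy
      obtain ⟨Kx, δx, hδx, hKx⟩ :=
        hνu Hx hHxb hHxue (fun y => f₀ (x * y)) ⟨f₀, hf₀, rfl⟩ δ' hδ'
      exact ⟨Kx, δx, hδx, fun f hf hyp => hKx _ ⟨f, hf, rfl⟩ hyp⟩
    choose Kx δx hδx hKx using hx
    -- assemble final finite set and δ
    set K : Finset G := K'.biUnion (fun x => (Kx x).image (fun y => x * y)) with hKdef
    set S : Finset ℝ := insert (1 : ℝ) (K'.image δx) with hSdef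
    have hSne : S.Nonempty := ⟨1, Finset.mem_insert_self _ _⟩
    set δ : ℝ := S.min' hSne with hδdef
    have hδpos : 0 < δ := by
      rw [hδdef]
      rw [Finset.lt_min'_iff]
      intro b hb
      rw [hSdef, Finset.mem_insert] at hb
      rcases hb with rfl | hb
      · norm_num
      · obtain ⟨x, _, rfl⟩ := Finset.mem_image.mp hb
        exact hδx x
    refine ⟨K, δ, hδpos, ?_⟩
    intro f hfH hclose
    have : |μ (T f) - μ (T f₀)| < ε := by
      refine hK' (T f) ⟨f, hfH, rfl⟩ ?_
      intro x hxK'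
      refine hKx x f hfH ?_
      intro y hy
      have hxyK : x * y ∈ K := Finset.mem_biUnion.mpr
        ⟨x, hxK', Finset.mem_image_of_mem _ hy⟩
      have h1 := hclose _ hxyK
      have h2 : δ ≤ δx x :=
        Finset.min'_le _ _ (Finset.mem_insert.mpr (Or.inr (Finset.mem_image_of_mem δx hxK')))
      linarith
    exact this
  · -- positivity part
    intro hμp hνp f hf hfpos
    have hTfUb : IsUb (T f) := by
      obtain ⟨Cf0, hCf0⟩ := hf.2
      set Cf : ℝ := max Cf0 0 + 1 with hCf
      have hCfpos : 0 < Cf := by positivity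
      constructor
      · refine (myUc_iff hU _).mpr fun ε hε => ?_
        set ε' : ℝ := ε / (2 * (Cν + 1)) with hε'def
        have hε' : 0 < ε' := by positivity
        obtain ⟨V, hV, hVf⟩ := (myUc_iff hU f).mp hf.1 ε' hε'
        refine ⟨V, hV, fun x x' hx => ?_⟩
        have h1 : ∀ y : G, |f (x' * y) - f (x * y)| ≤ ε' := by
          intro y
          have : (x' * y) / (x * y) = x' / x := by
            simp [div_eq_mul_inv, mul_inv_rev, mul_assoc]
          exact le_of_lt (hVf (x * y) (x' * y) (by rw [this]; exact hx))
        calc |T f x' - T f x| ≤ Cν * ε' :=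
              hνdiff _ _ (hsect f hf x') (hsect f hf x) ε' hε' h1
          _ < ε := hTε ε hε
      · refine ⟨Cν * Cf, fun x => ?_⟩
        refine hCν _ (hsect f hf x) Cf hCfpos (fun y => ?_)
        have h1 := hCf0 (x * y)
        have h2 := le_max_left Cf0 (0 : ℝ)
        rw [hCf]; linarith
    have hTfpos : ∀ x, 0 ≤ T f x := fun x =>
      hνp _ (hsect f hf x) (fun y => hfpos _)
    exact hμp (T f) hTfUb hTfpos
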